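/- arXiv:2510.17992 — 2 statements merged into one kernel-verified Lean document; each statement's English description precedes it below -/
import Mathlib

section
/- Let T > 0, let k : [0,T] → ℝ be absolutely continuous with k(t) = k(0) + ∫₀^t k̇(s) ds, k̇ ∈ L₁((0,T)), and assume k is nonnegative and nonincreasing. Let H ∈ C¹(ℝ) be convex with H(0) ≤ 0, and let u : [0,T] → ℝ be continuous. Then for almost every t ∈ (0,T): H'(u(t)) · (d/dt)(k*u)(t) ≥ (d/dt)(k*(H∘u))(t). -/
open MeasureTheory Set intervalIntegral Filter
open scoped Interval

lemma tangent_line {H H' : ℝ → ℝ} (hc : ConvexOn ℝ Set.univ H)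
    (hd : ∀ y, HasDerivAt H (H' y) y) (x y : ℝ) :
    H y + H' y * (x - y) ≤ H x := by
  rcases lt_trichotomy x y with h | h | h
  · have := hc.slope_le_of_hasDerivAt (mem_univ x) (mem_univ y) h (hd y)
    rw [slope_def_field] at this
    have hxy : y - x > 0 := by linarith
    rw [div_le_iff₀ hxy] at this
    · nlinarith
  · simp [h]
  · have := hc.le_slope_of_hasDerivAt (mem_univ y) (mem_univ x) h (hd y)
    rw [slope_def_field] at this
    have hxy : x - y > 0 := by linarith
    rw [le_div_iff₀ hxy] at this
    · nlinarith

lemma conv_swap {q f : ℝ → ℝ} (hq : Integrable q) (hqm : StronglyMeasurable q)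
    (hf : Continuous f) {M : ℝ} (hfb : ∀ x, |f x| ≤ M) {τ : ℝ} (hτ : 0 ≤ τ) :
    ∫ s in (0:ℝ)..τ, (∫ r in (0:ℝ)..(τ - s), q r) * f s
      = ∫ r in (0:ℝ)..τ, q r * ∫ s in (0:ℝ)..(τ - r), f s := by
  have hM : 0 ≤ M := le_trans (abs_nonneg _) (hfb 0)
  set D : Set (ℝ × ℝ) := {p | 0 < p.1 ∧ 0 < p.2 ∧ p.1 + p.2 ≤ τ} with hD_def
  have hD : MeasurableSet D := by
    apply MeasurableSet.inter (measurableSet_lt measurable_const measurable_fst)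
    exact MeasurableSet.inter (measurableSet_lt measurable_const measurable_snd)
      (measurableSet_le (measurable_fst.add measurable_snd) measurable_const)
  set G : ℝ × ℝ → ℝ := D.indicator (fun p => f p.1 * q p.2) with hG_def
  have hGm : AEStronglyMeasurable G (volume.prod volume) :=
    (((hf.measurable.comp measurable_fst).mul
      (hqm.measurable.comp measurable_snd)).indicator hD).aestronglyMeasurable
  have hGi : Integrable G (volume.prod volume) := by
    have hgi : Integrable (fun p : ℝ × ℝ =>
        ((Icc (0:ℝ) τ).indicator (fun _ => M) p.1) * q p.2) (volume.prod volume) := by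
      apply Integrable.mul_prod _ hq
      rw [integrable_indicator_iff measurableSet_Icc]
      exact integrableOn_const (hs := by simp)
    refine hgi.mono hGm (Filter.Eventually.of_forall fun p => ?_)
    by_cases hp : p ∈ D
    · have h1 : G p = f p.1 * q p.2 := indicator_of_mem hp _
      have hp1 : p.1 ∈ Icc (0:ℝ) τ := ⟨hp.1.le, by rcases hp with ⟨h1', h2', h3'⟩; linarith⟩
      rw [h1, indicator_of_mem hp1]
      simp only [norm_mul, Real.norm_eq_abs, abs_mul]
      rw [abs_of_nonneg hM]
      exact mul_le_mul_of_nonneg_right (hfb _) (abs_nonneg _)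
    · rw [hG_def, indicator_of_notMem hp]
      simp only [norm_zero]
      positivity
  have key1 : ∀ s : ℝ, (∫ r, G (s, r))
      = (Ioc (0:ℝ) τ).indicator (fun s => (∫ r in (0:ℝ)..(τ - s), q r) * f s) s := by
    intro s
    by_cases hs : s ∈ Ioc (0:ℝ) τ
    · have hfun : (fun r => G (s, r)) = (Ioc (0:ℝ) (τ - s)).indicator (fun r => f s * q r) := by
        funext r
        simp only [hG_def, Set.indicator_apply, hD_def, mem_setOf_eq, mem_Ioc]
        by_cases h : 0 < r ∧ r ≤ τ - s
        · rw [if_pos ⟨hs.1, h.1, by linarith [h.2]⟩, if_pos h]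
        · rw [if_neg, if_neg h]
          intro hm
          exact h ⟨hm.2.1, by linarith [hm.2.2]⟩
      rw [hfun, MeasureTheory.integral_indicator measurableSet_Ioc, indicator_of_mem hs,
        ← intervalIntegral.integral_of_le (by linarith [hs.2] : (0:ℝ) ≤ τ - s),
        intervalIntegral.integral_const_mul, mul_comm]
    · rw [indicator_of_notMem hs]
      have : (fun r => G (s, r)) = fun _ => 0 := by
        funext r
        rw [hG_def, indicator_of_notMem]
        intro hm
        simp only [mem_Ioc, not_and_or, not_lt, not_le] at hs
        rcases hs with h | h
        · exact absurd hm.1 (not_lt.2 h)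
        · rcases hm with ⟨_, h2, h3⟩; linarith
      rw [this, MeasureTheory.integral_zero]
  have key2 : ∀ r : ℝ, (∫ s, G (s, r))
      = (Ioc (0:ℝ) τ).indicator (fun r => q r * ∫ s in (0:ℝ)..(τ - r), f s) r := by
    intro r
    by_cases hr : r ∈ Ioc (0:ℝ) τ
    · have hfun : (fun s => G (s, r)) = (Ioc (0:ℝ) (τ - r)).indicator (fun s => f s * q r) := by
        funext s
        simp only [hG_def, Set.indicator_apply, hD_def, mem_setOf_eq, mem_Ioc]
        by_cases h : 0 < s ∧ s ≤ τ - r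
        · rw [if_pos ⟨h.1, hr.1, by linarith [h.2]⟩, if_pos h]
        · rw [if_neg, if_neg h]
          intro hm
          exact h ⟨hm.1, by linarith [hm.2.2]⟩
      rw [hfun, MeasureTheory.integral_indicator measurableSet_Ioc, indicator_of_mem hr,
        ← intervalIntegral.integral_of_le (by linarith [hr.2] : (0:ℝ) ≤ τ - r),
        intervalIntegral.integral_mul_const, mul_comm]
    · rw [indicator_of_notMem hr]
      have : (fun s => G (s, r)) = fun _ => 0 := by
        funext s
        rw [hG_def, indicator_of_notMem]
        intro hm
        simp only [mem_Ioc, not_and_or, not_lt, not_le] at hr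
        rcases hr with h | h
        · exact absurd hm.2.1 (not_lt.2 h)
        · rcases hm with ⟨h1, _, h3⟩; linarith
      rw [this, MeasureTheory.integral_zero]
  calc ∫ s in (0:ℝ)..τ, (∫ r in (0:ℝ)..(τ - s), q r) * f s
      = ∫ s in Ioc (0:ℝ) τ, (∫ r in (0:ℝ)..(τ - s), q r) * f s :=
        intervalIntegral.integral_of_le hτ
    _ = ∫ s, (Ioc (0:ℝ) τ).indicator (fun s => (∫ r in (0:ℝ)..(τ - s), q r) * f s) s :=
        (MeasureTheory.integral_indicator measurableSet_Ioc).symm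
    _ = ∫ s, ∫ r, G (s, r) := by simp_rw [key1]
    _ = ∫ r, ∫ s, G (s, r) := integral_integral_swap hGi
    _ = ∫ r, (Ioc (0:ℝ) τ).indicator (fun r => q r * ∫ s in (0:ℝ)..(τ - r), f s) r := by
        simp_rw [key2]
    _ = ∫ r in Ioc (0:ℝ) τ, q r * ∫ s in (0:ℝ)..(τ - r), f s :=
        MeasureTheory.integral_indicator measurableSet_Ioc
    _ = ∫ r in (0:ℝ)..τ, q r * ∫ s in (0:ℝ)..(τ - r), f s :=
        (intervalIntegral.integral_of_le hτ).symm

lemma conv_repr {k q f : ℝ → ℝ} {T : ℝ} (hq : Integrable q) (hqm : StronglyMeasurable q)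
    (hf : Continuous f) {M : ℝ} (hfb : ∀ x, |f x| ≤ M)
    (hk : ∀ x ∈ Icc (0:ℝ) T, k x = k 0 + ∫ r in (0:ℝ)..x, q r) {τ : ℝ} (hτ : τ ∈ Icc (0:ℝ) T) :
    ∫ s in (0:ℝ)..τ, k (τ - s) * f s
      = k 0 * (∫ s in (0:ℝ)..τ, f s)
        + ∫ r in (0:ℝ)..τ, q r * ∫ s in (0:ℝ)..(τ - r), f s := by
  have h1 : EqOn (fun s => k (τ - s) * f s)
      (fun s => k 0 * f s + (∫ r in (0:ℝ)..(τ - s), q r) * f s) (uIcc (0:ℝ) τ) := by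
    intro s hs
    rw [uIcc_of_le hτ.1, mem_Icc] at hs
    have : τ - s ∈ Icc (0:ℝ) T := ⟨by linarith [hs.2], by linarith [hτ.2, hs.1]⟩
    simp only
    rw [hk _ this, add_mul]
  rw [intervalIntegral.integral_congr h1, intervalIntegral.integral_add,
    intervalIntegral.integral_const_mul, conv_swap hq hqm hf hfb hτ.1]
  · exact (continuous_const.mul hf).intervalIntegrable _ _
  · apply IntervalIntegrable.continuousOn_mul (hf.intervalIntegrable _ _)
    exact ((intervalIntegral.continuous_primitive
      (fun a b => hq.intervalIntegrable) 0).comp (continuous_const.sub continuous_id)).continuousOn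

lemma hasDerivAt_conv {q f Φ : ℝ → ℝ} (hq : Integrable q) (hqm : StronglyMeasurable q)
    (hf : Continuous f) {M : ℝ} (hfb : ∀ x, |f x| ≤ M)
    (hΦ : ∀ x, Φ x = ∫ s in (0:ℝ)..x, f s) (t : ℝ) :
    HasDerivAt (fun τ => ∫ r in (0:ℝ)..τ, q r * Φ (τ - r))
      (∫ r in (0:ℝ)..t, q r * f (t - r)) t := by
  have hM : 0 ≤ M := le_trans (abs_nonneg _) (hfb 0)
  have hΦfun : Φ = fun x => ∫ s in (0:ℝ)..x, f s := funext hΦ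
  have hΦd : ∀ x : ℝ, HasDerivAt Φ (f x) x := by
    intro x
    rw [hΦfun]
    exact intervalIntegral.integral_hasDerivAt_right (hf.intervalIntegrable _ _)
      (hf.stronglyMeasurable.stronglyMeasurableAtFilter) hf.continuousAt
  have hΦc : Continuous Φ := by
    rw [hΦfun]
    exact intervalIntegral.continuous_primitive (fun a b => hf.intervalIntegrable a b) 0
  have hΦlip : ∀ a b : ℝ, |Φ a - Φ b| ≤ M * |a - b| := by
    intro a b
    have h1 : Φ a - Φ b = ∫ s in b..a, f s := by
      rw [hΦ a, hΦ b]
      exact intervalIntegral.integral_interval_sub_left (hf.intervalIntegrable _ _)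
        (hf.intervalIntegrable _ _)
    rw [h1]
    have := intervalIntegral.norm_integral_le_of_norm_le_const
      (C := M) (f := f) (a := b) (b := a) (fun x _ => by simpa using hfb x)
    simpa [Real.norm_eq_abs, abs_sub_comm a b] using this
  have hΦ0 : Φ 0 = 0 := by rw [hΦ 0, intervalIntegral.integral_same]
  have hΦbd : ∀ a b : ℝ, |Φ a| ≤ M * |a - b| + M * |b| := by
    intro a b
    calc |Φ a| = |(Φ a - Φ b) + (Φ b - Φ 0)| := by rw [hΦ0]; ring_nf
      _ ≤ |Φ a - Φ b| + |Φ b - Φ 0| := abs_add_le _ _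
      _ ≤ M * |a - b| + M * |b - 0| := add_le_add (hΦlip _ _) (hΦlip _ _)
      _ = M * |a - b| + M * |b| := by rw [sub_zero]
  have hInt : ∀ (a b τ : ℝ), IntervalIntegrable (fun r => q r * Φ (τ - r)) volume a b :=
    fun a b τ => (hq.intervalIntegrable).mul_continuousOn
      ((hΦc.comp (continuous_const.sub continuous_id)).continuousOn)
  set P : ℝ → ℝ := fun x => ∫ s in (0:ℝ)..x, ‖q s‖ with hP
  have hPc : Continuous P :=
    intervalIntegral.continuous_primitive (fun a b => hq.norm.intervalIntegrable) 0
  rw [hasDerivAt_iff_tendsto_slope]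
  have decomp : ∀ τ : ℝ, τ ≠ t → slope (fun τ => ∫ r in (0:ℝ)..τ, q r * Φ (τ - r)) t τ =
      (∫ r in (0:ℝ)..t, q r * ((Φ (τ - r) - Φ (t - r)) / (τ - t)))
        + (τ - t)⁻¹ * ∫ r in t..τ, q r * Φ (τ - r) := by
    intro τ hτ
    rw [slope_def_field]
    have h1 : (∫ r in (0:ℝ)..t, q r * Φ (τ - r)) + (∫ r in t..τ, q r * Φ (τ - r))
        = ∫ r in (0:ℝ)..τ, q r * Φ (τ - r) :=
      intervalIntegral.integral_add_adjacent_intervals (hInt 0 t τ) (hInt t τ τ)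
    have h2 : (∫ r in (0:ℝ)..t, q r * Φ (τ - r)) - (∫ r in (0:ℝ)..t, q r * Φ (t - r))
        = ∫ r in (0:ℝ)..t, q r * (Φ (τ - r) - Φ (t - r)) := by
      rw [← intervalIntegral.integral_sub (hInt 0 t τ) (hInt 0 t t)]
      congr 1; funext r; ring
    have h3 : (∫ r in (0:ℝ)..τ, q r * Φ (τ - r)) - (∫ r in (0:ℝ)..t, q r * Φ (t - r))
        = (∫ r in (0:ℝ)..t, q r * (Φ (τ - r) - Φ (t - r))) + ∫ r in t..τ, q r * Φ (τ - r) := by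
      rw [← h1, ← h2]; ring
    rw [h3, add_div, div_eq_inv_mul (∫ r in t..τ, q r * Φ (τ - r)) (τ - t),
      ← intervalIntegral.integral_div]
    simp_rw [mul_div_assoc]
  have t1 : Tendsto (fun τ => ∫ r in (0:ℝ)..t, q r * ((Φ (τ - r) - Φ (t - r)) / (τ - t)))
      (nhdsWithin t {t}ᶜ) (nhds (∫ r in (0:ℝ)..t, q r * f (t - r))) := by
    apply intervalIntegral.tendsto_integral_filter_of_dominated_convergence
      (fun r => ‖q r‖ * M)
    · apply Eventually.of_forall
      intro τ
      exact (hqm.aestronglyMeasurable.restrict).mul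
        ((((hΦc.comp (continuous_const.sub continuous_id)).sub
          (hΦc.comp (continuous_const.sub continuous_id))).div_const
            (τ - t)).aestronglyMeasurable.restrict)
    · filter_upwards [self_mem_nhdsWithin] with τ (hτ : τ ≠ t)
      apply Eventually.of_forall
      intro x _
      rw [norm_mul]
      apply mul_le_mul_of_nonneg_left _ (norm_nonneg _)
      rw [Real.norm_eq_abs, abs_div, div_le_iff₀ (abs_pos.2 (sub_ne_zero.2 hτ))]
      calc |Φ (τ - x) - Φ (t - x)| ≤ M * |(τ - x) - (t - x)| := hΦlip _ _
        _ = M * |τ - t| := by ring_nf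
    · exact ((hq.norm.mul_const M).intervalIntegrable)
    · apply Eventually.of_forall
      intro x _
      have hs := hΦd (t - x)
      rw [hasDerivAt_iff_tendsto_slope] at hs
      have hmap : Tendsto (fun τ : ℝ => τ - x) (nhdsWithin t {t}ᶜ)
          (nhdsWithin (t - x) {t - x}ᶜ) := by
        apply tendsto_nhdsWithin_of_tendsto_nhds_of_eventually_within
        · exact ((continuous_id.sub continuous_const).tendsto t).mono_left nhdsWithin_le_nhds
        · filter_upwards [self_mem_nhdsWithin] with τ (hτ : τ ≠ t)
          simp only [mem_compl_iff, mem_singleton_iff]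
          intro h
          exact hτ (by linarith)
      have hcomp := hs.comp hmap
      have heq : ((slope Φ (t - x)) ∘ (fun τ : ℝ => τ - x))
          = fun τ : ℝ => (Φ (τ - x) - Φ (t - x)) / (τ - t) := by
        funext τ
        simp only [Function.comp_apply, slope_def_field]
        congr 1
        ring
      rw [heq] at hcomp
      exact hcomp.const_mul (q x)
  have t2 : Tendsto (fun τ => (τ - t)⁻¹ * ∫ r in t..τ, q r * Φ (τ - r))
      (nhdsWithin t {t}ᶜ) (nhds 0) := by
    apply squeeze_zero_norm' (a := fun τ => M * |P τ - P t|)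
    · filter_upwards [self_mem_nhdsWithin] with τ (hτ : τ ≠ t)
      have habs : (0:ℝ) < |τ - t| := abs_pos.2 (sub_ne_zero.2 hτ)
      have hb : ‖∫ r in t..τ, q r * Φ (τ - r)‖ ≤ (∫ x in Ι t τ, ‖q x‖) * (M * |τ - t|) := by
        refine (intervalIntegral.norm_integral_le_integral_norm_uIoc).trans ?_
        rw [← MeasureTheory.integral_mul_const]
        apply setIntegral_mono_on
        · exact (intervalIntegrable_iff.mp ((hInt t τ τ).norm))
        · exact ((hq.norm.mul_const _).integrableOn)
        · exact measurableSet_uIoc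
        · intro x hx
          rw [norm_mul]
          apply mul_le_mul_of_nonneg_left _ (norm_nonneg _)
          rw [Real.norm_eq_abs]
          have hxm : min t τ < x ∧ x ≤ max t τ := by
            simpa [Set.uIoc, mem_Ioc] using hx
          have hmaxmin : max t τ - min t τ = |τ - t| := max_sub_min_eq_abs t τ
          have h1 : |τ - x| ≤ |τ - t| := by
            rw [abs_le]
            constructor
            · have := le_max_right t τ
              have := min_le_right t τ
              nlinarith [hxm.1, hxm.2]
            · have := le_max_right t τ
              have := min_le_right t τ
              nlinarith [hxm.1, hxm.2]
          calc |Φ (τ - x)| ≤ M * |(τ - x) - 0| + M * |(0:ℝ)| := hΦbd (τ - x) 0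
            _ = M * |τ - x| := by simp
            _ ≤ M * |τ - t| := mul_le_mul_of_nonneg_left h1 hM
      have hPeq : (∫ x in Ι t τ, ‖q x‖) = |P τ - P t| := by
        rcases le_total t τ with h | h
        · rw [uIoc_of_le h]
          have h2 : P τ - P t = ∫ x in t..τ, ‖q x‖ :=
            intervalIntegral.integral_interval_sub_left (hq.norm.intervalIntegrable)
              (hq.norm.intervalIntegrable)
          rw [← intervalIntegral.integral_of_le h, ← h2, abs_of_nonneg]
          rw [h2]
          exact intervalIntegral.integral_nonneg h (fun x _ => norm_nonneg _)
        · rw [uIoc_of_ge h]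
          have h2 : P t - P τ = ∫ x in τ..t, ‖q x‖ :=
            intervalIntegral.integral_interval_sub_left (hq.norm.intervalIntegrable)
              (hq.norm.intervalIntegrable)
          rw [← intervalIntegral.integral_of_le h, ← h2, abs_sub_comm, abs_of_nonneg]
          rw [h2]
          exact intervalIntegral.integral_nonneg h (fun x _ => norm_nonneg _)
      calc ‖(τ - t)⁻¹ * ∫ r in t..τ, q r * Φ (τ - r)‖
          = |τ - t|⁻¹ * ‖∫ r in t..τ, q r * Φ (τ - r)‖ := by
            rw [norm_mul, Real.norm_eq_abs (τ - t)⁻¹, abs_inv]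
        _ ≤ |τ - t|⁻¹ * ((∫ x in Ι t τ, ‖q x‖) * (M * |τ - t|)) := by
            apply mul_le_mul_of_nonneg_left hb (by positivity)
        _ = M * (∫ x in Ι t τ, ‖q x‖) := by
            field_simp
        _ = M * |P τ - P t| := by rw [hPeq]
    · have : Tendsto (fun τ => M * |P τ - P t|) (nhds t) (nhds (M * |P t - P t|)) :=
        (((hPc.tendsto t).sub tendsto_const_nhds).abs).const_mul M
      simpa using this.mono_left nhdsWithin_le_nhds
  have hsum := t1.add t2
  rw [add_zero] at hsum
  apply hsum.congr'
  filter_upwards [self_mem_nhdsWithin] with τ (hτ : τ ≠ t)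
  exact (decomp τ hτ).symm

lemma q_ae_nonpos {k q : ℝ → ℝ} {T : ℝ} (hq : Integrable q)
    (hq0 : ∀ x ∉ Ioo (0:ℝ) T, q x = 0)
    (hkq : ∀ x ∈ Icc (0:ℝ) T, k x = k 0 + ∫ r in (0:ℝ)..x, q r)
    (hk_anti : AntitoneOn k (Icc 0 T)) :
    ∀ᵐ x : ℝ, q x ≤ 0 := by
  filter_upwards [IsUnifLocDoublingMeasure.ae_tendsto_average (μ := volume)
    (hq.locallyIntegrable) 1] with x hx
  by_cases hxI : x ∈ Ioo (0:ℝ) T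
  swap
  · rw [hq0 x hxI]
  · have hmem : ∀ᶠ j : ℝ in nhdsWithin 0 (Ioi 0), x ∈ Metric.closedBall x (1 * j) := by
      filter_upwards [self_mem_nhdsWithin] with j (hj : j ∈ Ioi (0:ℝ))
      simp [Metric.mem_closedBall, (mem_Ioi.1 hj).le]
    have htend := hx (fun _ : ℝ => x) id tendsto_id hmem
    apply le_of_tendsto htend
    have hpos : 0 < min x (T - x) := lt_min hxI.1 (by linarith [hxI.2])
    filter_upwards [Ioo_mem_nhdsGT_of_mem (left_mem_Ico.2 hpos)] with j hj
    obtain ⟨hj0, hjlt⟩ := hj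
    have hxj1 : (0:ℝ) ≤ x - j := by
      have := lt_min_iff.1 hjlt
      linarith [this.1]
    have hxj2 : x + j ≤ T := by
      have := lt_min_iff.1 hjlt
      linarith [this.2]
    have hle : x - j ≤ x + j := by linarith
    have hball : Metric.closedBall x j = Icc (x - j) (x + j) := Real.closedBall_eq_Icc
    simp only [id_eq]
    rw [hball, setAverage_eq]
    have hint : ∫ y in Icc (x - j) (x + j), q y = k (x + j) - k (x - j) := by
      rw [integral_Icc_eq_integral_Ioc, ← intervalIntegral.integral_of_le hle]
      have h1 := hkq (x + j) ⟨by linarith, hxj2⟩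
      have h2 := hkq (x - j) ⟨hxj1, by linarith⟩
      have h3 : (∫ r in (0:ℝ)..(x+j), q r) - ∫ r in (0:ℝ)..(x-j), q r
          = ∫ r in (x-j)..(x+j), q r :=
        intervalIntegral.integral_interval_sub_left (hq.intervalIntegrable)
          (hq.intervalIntegrable)
      rw [← h3]
      rw [h1, h2]
      ring
    rw [smul_eq_mul]
    apply mul_nonpos_of_nonneg_of_nonpos
    · positivity
    · rw [hint, sub_nonpos]
      exact hk_anti ⟨hxj1, by linarith⟩ ⟨by linarith, hxj2⟩ hle

lemma exists_measurable_version {T : ℝ} {kdot : ℝ → ℝ} (hkdot : IntegrableOn kdot (Ioo 0 T)) :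
    ∃ q : ℝ → ℝ, StronglyMeasurable q ∧ Integrable q volume ∧
      (∀ x ∉ Ioo (0:ℝ) T, q x = 0) ∧ kdot =ᵐ[volume.restrict (Ioo 0 T)] q := by
  refine ⟨(Ioo (0:ℝ) T).indicator (hkdot.1.mk kdot), 
    (hkdot.1.stronglyMeasurable_mk).indicator measurableSet_Ioo, ?_, 
    fun x hx => indicator_of_notMem hx _, ?_⟩
  · rw [integrable_indicator_iff measurableSet_Ioo]
    exact hkdot.congr hkdot.1.ae_eq_mk
  · filter_upwards [hkdot.1.ae_eq_mk, ae_restrict_mem measurableSet_Ioo] with x h1 h2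
    rw [indicator_of_mem h2]
    exact h1

set_option maxHeartbeats 2000000 in
/-- Convexity inequality derived from the fundamental identity (18): for
`k ∈ H¹₁([0,T])` nonnegative and nonincreasing, `H ∈ C¹(ℝ)` convex with
`H(0) ≤ 0`, and `u` continuous, for a.e. `t ∈ (0,T)` one has
`H'(u(t)) (d/dt)(k*u)(t) ≥ (d/dt)(k*(H∘u))(t)`. -/
theorem fundamental_inequality (T : ℝ) (hT : 0 < T)
    (k kdot u H H' : ℝ → ℝ)
    (hkdot : IntegrableOn kdot (Ioo 0 T))
    (hk : ∀ t ∈ Icc (0:ℝ) T, k t = k 0 + ∫ s in (0:ℝ)..t, kdot s)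
    (hk_nonneg : ∀ t ∈ Icc (0:ℝ) T, 0 ≤ k t)
    (hk_anti : AntitoneOn k (Icc 0 T))
    (hu : ContinuousOn u (Icc 0 T))
    (hH : ∀ y : ℝ, HasDerivAt H (H' y) y)
    (hH' : Continuous H')
    (hH_conv : ConvexOn ℝ Set.univ H)
    (hH0 : H 0 ≤ 0) :
    ∀ᵐ t : ℝ, t ∈ Ioo 0 T →
      ∃ d₁ d₂ : ℝ,
        HasDerivAt (fun τ => ∫ s in (0:ℝ)..τ, k (τ - s) * u s) d₁ t ∧
        HasDerivAt (fun τ => ∫ s in (0:ℝ)..τ, k (τ - s) * H (u s)) d₂ t ∧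
        H' (u t) * d₁ ≥ d₂ := by
  -- continuous bounded extension of u
  have hproj : Continuous fun x : ℝ => max 0 (min x T) :=
    continuous_const.max (continuous_id.min continuous_const)
  have hmapsto : ∀ x : ℝ, max 0 (min x T) ∈ Icc (0:ℝ) T :=
    fun x => ⟨le_max_left _ _, max_le hT.le (min_le_right x T)⟩
  set f₁ : ℝ → ℝ := fun x => u (max 0 (min x T)) with hf₁def
  have hf₁c : Continuous f₁ := hu.comp_continuous hproj hmapsto
  have hf₁eq : ∀ x ∈ Icc (0:ℝ) T, f₁ x = u x := by
    intro x hx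
    have : max 0 (min x T) = x := by rw [min_eq_left hx.2, max_eq_right hx.1]
    simp only [hf₁def, this]
  have hHc : Continuous H := continuous_iff_continuousAt.2 fun y => (hH y).continuousAt
  set f₂ : ℝ → ℝ := fun x => H (f₁ x) with hf₂def
  have hf₂c : Continuous f₂ := hHc.comp hf₁c
  have hf₂eq : ∀ x ∈ Icc (0:ℝ) T, f₂ x = H (u x) := by
    intro x hx
    simp only [hf₂def, hf₁eq x hx]
  obtain ⟨M₁, hM₁⟩ := isCompact_Icc.exists_bound_of_continuousOn hu
  have hf₁b : ∀ x, |f₁ x| ≤ M₁ := fun x => by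
    simpa [Real.norm_eq_abs] using hM₁ _ (hmapsto x)
  obtain ⟨M₂, hM₂⟩ := isCompact_Icc.exists_bound_of_continuousOn (hHc.comp_continuousOn hu)
  have hf₂b : ∀ x, |f₂ x| ≤ M₂ := fun x => by
    simpa [Real.norm_eq_abs, hf₂def] using hM₂ _ (hmapsto x)
  -- measurable globally-integrable version of kdot
  obtain ⟨q, hqm, hqint, hq0, hae⟩ := exists_measurable_version hkdot
  have hkq : ∀ x ∈ Icc (0:ℝ) T, k x = k 0 + ∫ r in (0:ℝ)..x, q r := by
    intro x hx
    rw [hk x hx]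
    congr 1
    rw [intervalIntegral.integral_of_le hx.1, intervalIntegral.integral_of_le hx.1,
      integral_Ioc_eq_integral_Ioo, integral_Ioc_eq_integral_Ioo]
    exact integral_congr_ae
      (ae_restrict_of_ae_restrict_of_subset (Ioo_subset_Ioo le_rfl hx.2) hae)
  have hqneg : ∀ᵐ r : ℝ, q r ≤ 0 := q_ae_nonpos hqint hq0 hkq hk_anti
  -- pointwise statement for every t
  refine Eventually.of_forall fun t ht => ?_
  have htIcc : t ∈ Icc (0:ℝ) T := ⟨ht.1.le, ht.2.le⟩
  -- derivatives
  have hV₁ : HasDerivAt (fun τ => ∫ s in (0:ℝ)..τ, f₁ s) (f₁ t) t :=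
    intervalIntegral.integral_hasDerivAt_right (hf₁c.intervalIntegrable _ _)
      (hf₁c.stronglyMeasurable.stronglyMeasurableAtFilter) hf₁c.continuousAt
  have hV₂ : HasDerivAt (fun τ => ∫ s in (0:ℝ)..τ, f₂ s) (f₂ t) t :=
    intervalIntegral.integral_hasDerivAt_right (hf₂c.intervalIntegrable _ _)
      (hf₂c.stronglyMeasurable.stronglyMeasurableAtFilter) hf₂c.continuousAt
  have hC₁ := hasDerivAt_conv (Φ := fun x => ∫ s in (0:ℝ)..x, f₁ s)
    hqint hqm hf₁c hf₁b (fun x => rfl) t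
  have hC₂ := hasDerivAt_conv (Φ := fun x => ∫ s in (0:ℝ)..x, f₂ s)
    hqint hqm hf₂c hf₂b (fun x => rfl) t
  have hD1 : HasDerivAt (fun τ => k 0 * (∫ s in (0:ℝ)..τ, f₁ s)
        + ∫ r in (0:ℝ)..τ, q r * ∫ s in (0:ℝ)..(τ - r), f₁ s)
      (k 0 * f₁ t + ∫ r in (0:ℝ)..t, q r * f₁ (t - r)) t := (hV₁.const_mul (k 0)).add hC₁
  have hD2 : HasDerivAt (fun τ => k 0 * (∫ s in (0:ℝ)..τ, f₂ s)
        + ∫ r in (0:ℝ)..τ, q r * ∫ s in (0:ℝ)..(τ - r), f₂ s)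
      (k 0 * f₂ t + ∫ r in (0:ℝ)..t, q r * f₂ (t - r)) t := (hV₂.const_mul (k 0)).add hC₂
  have hEE₁ : (fun τ => ∫ s in (0:ℝ)..τ, k (τ - s) * u s) =ᶠ[nhds t]
      (fun τ => k 0 * (∫ s in (0:ℝ)..τ, f₁ s)
        + ∫ r in (0:ℝ)..τ, q r * ∫ s in (0:ℝ)..(τ - r), f₁ s) := by
    filter_upwards [Ioo_mem_nhds ht.1 ht.2] with τ hτ
    have hτIcc : τ ∈ Icc (0:ℝ) T := ⟨hτ.1.le, hτ.2.le⟩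
    have hcongr : ∫ s in (0:ℝ)..τ, k (τ - s) * u s = ∫ s in (0:ℝ)..τ, k (τ - s) * f₁ s := by
      apply intervalIntegral.integral_congr
      intro s hs
      rw [uIcc_of_le hτ.1.le] at hs
      have hsIcc : s ∈ Icc (0:ℝ) T := ⟨hs.1, le_trans hs.2 hτ.2.le⟩
      simp only [hf₁eq s hsIcc]
    rw [hcongr, conv_repr hqint hqm hf₁c hf₁b hkq hτIcc]
  have hEE₂ : (fun τ => ∫ s in (0:ℝ)..τ, k (τ - s) * H (u s)) =ᶠ[nhds t]
      (fun τ => k 0 * (∫ s in (0:ℝ)..τ, f₂ s)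
        + ∫ r in (0:ℝ)..τ, q r * ∫ s in (0:ℝ)..(τ - r), f₂ s) := by
    filter_upwards [Ioo_mem_nhds ht.1 ht.2] with τ hτ
    have hτIcc : τ ∈ Icc (0:ℝ) T := ⟨hτ.1.le, hτ.2.le⟩
    have hcongr : ∫ s in (0:ℝ)..τ, k (τ - s) * H (u s)
        = ∫ s in (0:ℝ)..τ, k (τ - s) * f₂ s := by
      apply intervalIntegral.integral_congr
      intro s hs
      rw [uIcc_of_le hτ.1.le] at hs
      have hsIcc : s ∈ Icc (0:ℝ) T := ⟨hs.1, le_trans hs.2 hτ.2.le⟩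
      simp only [hf₂eq s hsIcc]
    rw [hcongr, conv_repr hqint hqm hf₂c hf₂b hkq hτIcc]
  refine ⟨k 0 * f₁ t + ∫ r in (0:ℝ)..t, q r * f₁ (t - r),
    k 0 * f₂ t + ∫ r in (0:ℝ)..t, q r * f₂ (t - r),
    hEE₁.hasDerivAt_iff.2 hD1, hEE₂.hasDerivAt_iff.2 hD2, ?_⟩
  -- the inequality
  have hut : f₁ t = u t := hf₁eq t htIcc
  set y : ℝ := u t with hy
  set c : ℝ := H' y * y - H y with hc_def
  have hc : 0 ≤ c := by
    have := tangent_line hH_conv hH 0 y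
    simp only [hc_def]
    nlinarith [hH0]
  have hkt : 0 ≤ k t := hk_nonneg t htIcc
  have hqk : ∫ r in (0:ℝ)..t, q r = k t - k 0 := by
    have := hkq t htIcc
    linarith
  -- integrability facts
  have hi₁ : IntervalIntegrable (fun r => q r * f₁ (t - r)) volume 0 t :=
    (hqint.intervalIntegrable).mul_continuousOn
      ((hf₁c.comp (continuous_const.sub continuous_id)).continuousOn)
  have hi₂ : IntervalIntegrable (fun r => q r * f₂ (t - r)) volume 0 t :=
    (hqint.intervalIntegrable).mul_continuousOn
      ((hf₂c.comp (continuous_const.sub continuous_id)).continuousOn)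
  have hi₃ : IntervalIntegrable (fun r => q r * c) volume 0 t :=
    (hqint.intervalIntegrable).mul_const c
  have hsplit : ∫ r in (0:ℝ)..t, q r * (H' y * f₁ (t - r) - f₂ (t - r) - c)
      = H' y * (∫ r in (0:ℝ)..t, q r * f₁ (t - r))
        - (∫ r in (0:ℝ)..t, q r * f₂ (t - r)) - (∫ r in (0:ℝ)..t, q r) * c := by
    have heq : (fun r => q r * (H' y * f₁ (t - r) - f₂ (t - r) - c))
        = fun r => (H' y * (q r * f₁ (t - r)) - q r * f₂ (t - r)) - q r * c := by
      funext r; ring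
    rw [heq, intervalIntegral.integral_sub ((hi₁.const_mul (H' y)).sub hi₂) hi₃,
      intervalIntegral.integral_sub (hi₁.const_mul (H' y)) hi₂,
      intervalIntegral.integral_const_mul, intervalIntegral.integral_mul_const]
  have hnonneg : 0 ≤ ∫ r in (0:ℝ)..t, q r * (H' y * f₁ (t - r) - f₂ (t - r) - c) := by
    apply intervalIntegral.integral_nonneg_of_ae ht.1.le
    filter_upwards [hqneg] with r hr
    have hbr : H' y * f₁ (t - r) - f₂ (t - r) - c ≤ 0 := by
      have := tangent_line hH_conv hH (f₁ (t - r)) y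
      simp only [hf₂def, hc_def]
      nlinarith
    simp only [Pi.zero_apply]
    nlinarith [hr, hbr]
  have hf₂t : f₂ t = H y := by rw [hf₂def]; simp only [hut]
  rw [ge_iff_le]
  have hfinal : H' y * (k 0 * f₁ t + ∫ r in (0:ℝ)..t, q r * f₁ (t - r))
      - (k 0 * f₂ t + ∫ r in (0:ℝ)..t, q r * f₂ (t - r))
      = k t * c + ∫ r in (0:ℝ)..t, q r * (H' y * f₁ (t - r) - f₂ (t - r) - c) := by
    rw [hsplit, hqk, hut, hf₂t]
    simp only [hc_def]
    ring
  nlinarith [mul_nonneg hkt hc]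
end

section
/- Let α ∈ (0,1) and γ ≥ 0, and define for t > 0: k(t) = e^{−γt}·t^{−α}/Γ(1−α) and l(t) = e^{−γt}·t^{α−1}/Γ(α) + γ·∫₀^t e^{−γτ}·τ^{α−1}/Γ(α) dτ. Then (k*l)(t) = ∫₀^t k(t−s)·l(s) ds = 1 for every t > 0. -/
open MeasureTheory Set intervalIntegral Real

lemma beta_aux {α : ℝ} (hα0 : 0 < α) (hα1 : α < 1) {t : ℝ} (ht : 0 < t) :
    ∫ s in (0:ℝ)..t, s ^ (α - 1) * (t - s) ^ (-α) = Real.Gamma α * Real.Gamma (1 - α) := by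
  have h1 : (0:ℝ) < 1 - α := by linarith
  have hc : ∫ x in (0:ℝ)..t, (x : ℂ) ^ ((α : ℂ) - 1) * ((t : ℂ) - x) ^ (((1 - α : ℝ) : ℂ) - 1)
      = (t : ℂ) ^ ((α : ℂ) + ((1 - α : ℝ) : ℂ) - 1) * Complex.betaIntegral α ((1 - α : ℝ)) :=
    Complex.betaIntegral_scaled _ _ ht
  have hG : Complex.Gamma (α : ℂ) * Complex.Gamma ((1 - α : ℝ) : ℂ)
      = Complex.Gamma ((α : ℂ) + ((1 - α : ℝ) : ℂ)) * Complex.betaIntegral α ((1 - α : ℝ)) := by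
    apply Complex.Gamma_mul_Gamma_eq_betaIntegral <;> simp [hα0, h1]
  have hsum : (α : ℂ) + ((1 - α : ℝ) : ℂ) = 1 := by push_cast; ring
  rw [hsum, Complex.Gamma_one, one_mul] at hG
  rw [hsum] at hc
  simp only [sub_self, Complex.cpow_zero, one_mul] at hc
  -- convert the complex interval integral to the real one
  have hre : ((∫ s in (0:ℝ)..t, s ^ (α - 1) * (t - s) ^ (-α) : ℝ) : ℂ)
      = ∫ x in (0:ℝ)..t, (x : ℂ) ^ ((α : ℂ) - 1) * ((t : ℂ) - x) ^ (((1 - α : ℝ) : ℂ) - 1) := by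
    have hcast : ((∫ s in (0:ℝ)..t, s ^ (α - 1) * (t - s) ^ (-α) : ℝ) : ℂ)
        = ∫ s in (0:ℝ)..t, ((s ^ (α - 1) * (t - s) ^ (-α) : ℝ) : ℂ) := by
      exact_mod_cast (RCLike.intervalIntegral_ofReal (𝕜:=ℂ)
        (f := fun s => s ^ (α - 1) * (t - s) ^ (-α)) (μ := MeasureTheory.volume)
        (a := (0:ℝ)) (b := t)).symm
    rw [hcast]
    refine intervalIntegral.integral_congr fun x hx => ?_
    rw [uIcc_of_le ht.le] at hx
    push_cast
    rw [Complex.ofReal_cpow hx.1, Complex.ofReal_cpow (by linarith [hx.2] : (0:ℝ) ≤ t - x)]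
    push_cast
    ring_nf
  rw [← hre] at hc
  have : ((∫ s in (0:ℝ)..t, s ^ (α - 1) * (t - s) ^ (-α) : ℝ) : ℂ)
      = ((Real.Gamma α * Real.Gamma (1 - α) : ℝ) : ℂ) := by
    rw [hc, ← hG, Complex.ofReal_mul, Complex.Gamma_ofReal, Complex.Gamma_ofReal]
  exact_mod_cast this

lemma beta_integrable {α : ℝ} (hα0 : 0 < α) (hα1 : α < 1) {t : ℝ} (ht : 0 < t) :
    IntervalIntegrable (fun s => s ^ (α - 1) * (t - s) ^ (-α)) MeasureTheory.volume 0 t := by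
  have h2 : (0:ℝ) < t / 2 := by linarith
  have hpiece1 : IntervalIntegrable (fun s => s ^ (α - 1) * (t - s) ^ (-α))
      MeasureTheory.volume 0 (t / 2) := by
    apply IntervalIntegrable.mul_continuousOn
    · exact intervalIntegral.intervalIntegrable_rpow' (by linarith)
    · apply ContinuousOn.rpow_const
      · exact (continuous_const.sub continuous_id).continuousOn
      · intro x hx
        rw [uIcc_of_le h2.le] at hx
        exact Or.inl (sub_ne_zero.mpr (by linarith [hx.2] : x < t).ne')
  have hpiece2 : IntervalIntegrable (fun s => s ^ (α - 1) * (t - s) ^ (-α))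
      MeasureTheory.volume (t / 2) t := by
    apply IntervalIntegrable.continuousOn_mul
    · have h := (intervalIntegral.intervalIntegrable_rpow' (a := 0) (b := t / 2)
        (r := -α) (by linarith)).comp_sub_left t
      rw [sub_zero, show t - t / 2 = t / 2 by ring] at h
      exact h.symm
    · apply ContinuousOn.rpow_const continuous_id.continuousOn
      intro x hx
      rw [uIcc_of_le (by linarith : t / 2 ≤ t)] at hx
      exact Or.inl (by intro h; simp only [id_eq] at h; nlinarith [hx.1])
  exact hpiece1.trans hpiece2

lemma g_intble {α : ℝ} (γ : ℝ) (hα0 : 0 < α) (a b : ℝ) :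
    IntervalIntegrable (fun τ => Real.exp (-γ * τ) * τ ^ (α - 1) / Real.Gamma α)
      MeasureTheory.volume a b := by
  have h : (fun τ => Real.exp (-γ * τ) * τ ^ (α - 1) / Real.Gamma α)
      = fun τ => τ ^ (α - 1) * (Real.exp (-γ * τ) / Real.Gamma α) := by
    funext τ; ring
  rw [h]
  exact (intervalIntegral.intervalIntegrable_rpow' (by linarith)).mul_continuousOn
    (Continuous.continuousOn (by fun_prop))

lemma A_fun_eq (α γ t : ℝ) :
    (fun s => (Real.exp (-γ * (t - s)) * (t - s) ^ (-α) / Real.Gamma (1 - α)) *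
        (Real.exp (-γ * s) * s ^ (α - 1) / Real.Gamma α))
      = fun s => (Real.exp (-γ * t) / (Real.Gamma (1 - α) * Real.Gamma α)) *
        (s ^ (α - 1) * (t - s) ^ (-α)) := by
  funext s
  rw [show -γ * t = -γ * (t - s) + -γ * s by ring, Real.exp_add]
  ring

lemma A_intble {α : ℝ} (γ : ℝ) (hα0 : 0 < α) (hα1 : α < 1) {t : ℝ} (ht : 0 < t) :
    IntervalIntegrable (fun s => (Real.exp (-γ * (t - s)) * (t - s) ^ (-α) / Real.Gamma (1 - α)) *
        (Real.exp (-γ * s) * s ^ (α - 1) / Real.Gamma α)) MeasureTheory.volume 0 t := by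
  rw [A_fun_eq]
  exact (beta_integrable hα0 hα1 ht).const_mul _

lemma conv_A {α : ℝ} (γ : ℝ) (hα0 : 0 < α) (hα1 : α < 1) {t : ℝ} (ht : 0 < t) :
    ∫ s in (0:ℝ)..t, (Real.exp (-γ * (t - s)) * (t - s) ^ (-α) / Real.Gamma (1 - α)) *
        (Real.exp (-γ * s) * s ^ (α - 1) / Real.Gamma α) = Real.exp (-γ * t) := by
  rw [A_fun_eq, intervalIntegral.integral_const_mul, beta_aux hα0 hα1 ht]
  have h1 : Real.Gamma (1 - α) ≠ 0 := (Real.Gamma_pos_of_pos (by linarith)).ne'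
  have h2 : Real.Gamma α ≠ 0 := (Real.Gamma_pos_of_pos hα0).ne'
  field_simp

lemma triangle_swap {t : ℝ} (ht : 0 < t) (F : ℝ → ℝ → ℝ)
    (hF : MeasureTheory.Integrable (fun p : ℝ × ℝ => Set.indicator (Ioc 0 p.1) (F p.1) p.2)
      ((MeasureTheory.volume.restrict (Ioc (0:ℝ) t)).prod
        (MeasureTheory.volume.restrict (Ioc (0:ℝ) t)))) :
    ∫ x in Ioc (0:ℝ) t, (∫ y in Ioc (0:ℝ) x, F x y)
      = ∫ y in Ioc (0:ℝ) t, ∫ x in Ioc y t, F x y := by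
  have step1 : ∀ x ∈ Ioc (0:ℝ) t,
      ∫ y in Ioc (0:ℝ) x, F x y = ∫ y in Ioc (0:ℝ) t, (Ioc (0:ℝ) x).indicator (F x) y := by
    intro x hx
    rw [MeasureTheory.setIntegral_indicator measurableSet_Ioc,
      inter_eq_right.mpr (Ioc_subset_Ioc_right hx.2)]
  rw [MeasureTheory.setIntegral_congr_fun measurableSet_Ioc step1]
  rw [MeasureTheory.integral_integral_swap hF]
  refine MeasureTheory.setIntegral_congr_fun measurableSet_Ioc fun y hy => ?_
  have hind : ∀ x : ℝ, (Ioc (0:ℝ) x).indicator (F x) y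
      = (Ici y).indicator (fun x => F x y) x := by
    intro x
    by_cases h : y ≤ x
    · rw [indicator_of_mem (by exact ⟨hy.1, h⟩) (F x), indicator_of_mem (by exact h)]
    · rw [indicator_of_notMem (fun hmem => h hmem.2), indicator_of_notMem (by exact h)]
  simp only [hind]
  rw [MeasureTheory.setIntegral_indicator measurableSet_Ici,
    show Ioc (0:ℝ) t ∩ Ici y = Icc y t from ?_, MeasureTheory.integral_Icc_eq_integral_Ioc]
  ext x
  simp only [mem_inter_iff, mem_Ioc, mem_Ici, mem_Icc]
  constructor
  · rintro ⟨⟨_, hxt⟩, hyx⟩; exact ⟨hyx, hxt⟩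
  · rintro ⟨hyx, hxt⟩; exact ⟨⟨lt_of_lt_of_le hy.1 hyx, hxt⟩, hyx⟩

lemma ind_meas (F : ℝ → ℝ → ℝ) (hF : Measurable fun p : ℝ × ℝ => F p.1 p.2)
    (μ : MeasureTheory.Measure (ℝ × ℝ)) :
    MeasureTheory.AEStronglyMeasurable
      (fun p : ℝ × ℝ => (Ioc (0:ℝ) p.1).indicator (F p.1) p.2) μ := by
  have hT : MeasurableSet {p : ℝ × ℝ | 0 < p.2 ∧ p.2 ≤ p.1} :=
    (measurableSet_lt measurable_const measurable_snd).inter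
      (measurableSet_le measurable_snd measurable_fst)
  have heq : (fun p : ℝ × ℝ => (Ioc (0:ℝ) p.1).indicator (F p.1) p.2)
      = Set.indicator {p : ℝ × ℝ | 0 < p.2 ∧ p.2 ≤ p.1} (fun p => F p.1 p.2) := by
    funext p
    simp only [Set.indicator_apply, Set.mem_Ioc, Set.mem_setOf_eq]
  rw [heq]
  exact (hF.indicator hT).aestronglyMeasurable

lemma rpow_neg_intble {α : ℝ} (hα1 : α < 1) {t : ℝ} (ht : 0 < t) :
    IntervalIntegrable (fun s : ℝ => (t - s) ^ (-α)) MeasureTheory.volume 0 t := by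
  have h := (intervalIntegral.intervalIntegrable_rpow' (a := 0) (b := t)
    (r := -α) (by linarith)).comp_sub_left t
  rw [sub_zero, sub_self] at h
  exact h.symm

lemma fub1 {α γ t : ℝ} (hα0 : 0 < α) (hα1 : α < 1) (hγ : 0 ≤ γ) (ht : 0 < t) :
    MeasureTheory.Integrable
      (fun p : ℝ × ℝ => (Ioc (0:ℝ) p.1).indicator
        (fun y => (Real.exp (-γ * (t - p.1)) * (t - p.1) ^ (-α) / Real.Gamma (1 - α)) *
          (Real.exp (-γ * y) * y ^ (α - 1) / Real.Gamma α)) p.2)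
      ((MeasureTheory.volume.restrict (Ioc (0:ℝ) t)).prod
        (MeasureTheory.volume.restrict (Ioc (0:ℝ) t))) := by
  have hmeas := ind_meas
    (fun x y => (Real.exp (-γ * (t - x)) * (t - x) ^ (-α) / Real.Gamma (1 - α)) *
      (Real.exp (-γ * y) * y ^ (α - 1) / Real.Gamma α)) (by fun_prop)
    ((MeasureTheory.volume.restrict (Ioc (0:ℝ) t)).prod
      (MeasureTheory.volume.restrict (Ioc (0:ℝ) t)))
  have hΓ1 : (0:ℝ) < Real.Gamma (1 - α) := Real.Gamma_pos_of_pos (by linarith)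
  have hΓ2 : (0:ℝ) < Real.Gamma α := Real.Gamma_pos_of_pos hα0
  have h1 : MeasureTheory.Integrable (fun x => (t - x) ^ (-α) / Real.Gamma (1 - α))
      (MeasureTheory.volume.restrict (Ioc (0:ℝ) t)) := by
    rw [← MeasureTheory.IntegrableOn, ← intervalIntegrable_iff_integrableOn_Ioc_of_le ht.le]
    exact (rpow_neg_intble hα1 ht).mul_continuousOn continuousOn_const
  have h2 : MeasureTheory.Integrable (fun y => y ^ (α - 1) / Real.Gamma α)
      (MeasureTheory.volume.restrict (Ioc (0:ℝ) t)) := by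
    rw [← MeasureTheory.IntegrableOn, ← intervalIntegrable_iff_integrableOn_Ioc_of_le ht.le]
    exact (intervalIntegral.intervalIntegrable_rpow' (by linarith)).mul_continuousOn
      continuousOn_const
  refine MeasureTheory.Integrable.mono' (h1.mul_prod h2) hmeas ?_
  rw [MeasureTheory.Measure.prod_restrict]
  filter_upwards [MeasureTheory.ae_restrict_mem (measurableSet_Ioc.prod measurableSet_Ioc)]
    with p hp
  obtain ⟨hx, hy⟩ := hp
  have htx : (0:ℝ) ≤ t - p.1 := by linarith [hx.2]
  have hX : (0:ℝ) ≤ (t - p.1) ^ (-α) := Real.rpow_nonneg htx _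
  have hY : (0:ℝ) ≤ p.2 ^ (α - 1) := Real.rpow_nonneg hy.1.le _
  have he1 : Real.exp (-γ * (t - p.1)) ≤ 1 :=
    Real.exp_le_one_iff.mpr (by nlinarith)
  have he2 : Real.exp (-γ * p.2) ≤ 1 :=
    Real.exp_le_one_iff.mpr (by nlinarith [hy.1])
  calc ‖(Ioc (0:ℝ) p.1).indicator
        (fun y => (Real.exp (-γ * (t - p.1)) * (t - p.1) ^ (-α) / Real.Gamma (1 - α)) *
          (Real.exp (-γ * y) * y ^ (α - 1) / Real.Gamma α)) p.2‖
      ≤ ‖(Real.exp (-γ * (t - p.1)) * (t - p.1) ^ (-α) / Real.Gamma (1 - α)) *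
          (Real.exp (-γ * p.2) * p.2 ^ (α - 1) / Real.Gamma α)‖ :=
        norm_indicator_le_norm_self _ _
    _ = (Real.exp (-γ * (t - p.1)) * (t - p.1) ^ (-α) / Real.Gamma (1 - α)) *
          (Real.exp (-γ * p.2) * p.2 ^ (α - 1) / Real.Gamma α) := by
        rw [Real.norm_eq_abs, abs_of_nonneg]
        have := Real.exp_nonneg (-γ * (t - p.1))
        have := Real.exp_nonneg (-γ * p.2)
        positivity
    _ = (Real.exp (-γ * (t - p.1)) * Real.exp (-γ * p.2)) *
          ((t - p.1) ^ (-α) / Real.Gamma (1 - α) * (p.2 ^ (α - 1) / Real.Gamma α)) := by ring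
    _ ≤ 1 * ((t - p.1) ^ (-α) / Real.Gamma (1 - α) * (p.2 ^ (α - 1) / Real.Gamma α)) := by
        apply mul_le_mul_of_nonneg_right
        · nlinarith [Real.exp_nonneg (-γ * (t - p.1)), Real.exp_nonneg (-γ * p.2)]
        · positivity
    _ = (t - p.1) ^ (-α) / Real.Gamma (1 - α) * (p.2 ^ (α - 1) / Real.Gamma α) := one_mul _

lemma fub2 {α γ t : ℝ} (hα0 : 0 < α) (hα1 : α < 1) (hγ : 0 ≤ γ) (ht : 0 < t) :
    MeasureTheory.Integrable
      (fun p : ℝ × ℝ => (Ioc (0:ℝ) p.1).indicator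
        (fun τ => (Real.exp (-γ * (p.1 - τ)) * (p.1 - τ) ^ (-α) / Real.Gamma (1 - α)) *
          (Real.exp (-γ * τ) * τ ^ (α - 1) / Real.Gamma α)) p.2)
      ((MeasureTheory.volume.restrict (Ioc (0:ℝ) t)).prod
        (MeasureTheory.volume.restrict (Ioc (0:ℝ) t))) := by
  have hmeas := ind_meas
    (fun u τ => (Real.exp (-γ * (u - τ)) * (u - τ) ^ (-α) / Real.Gamma (1 - α)) *
      (Real.exp (-γ * τ) * τ ^ (α - 1) / Real.Gamma α)) (by fun_prop)
    ((MeasureTheory.volume.restrict (Ioc (0:ℝ) t)).prod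
      (MeasureTheory.volume.restrict (Ioc (0:ℝ) t)))
  rw [MeasureTheory.integrable_prod_iff hmeas]
  constructor
  · filter_upwards [MeasureTheory.ae_restrict_mem measurableSet_Ioc] with u hu
    rw [MeasureTheory.integrable_indicator_iff measurableSet_Ioc, MeasureTheory.IntegrableOn,
      MeasureTheory.Measure.restrict_restrict measurableSet_Ioc,
      inter_eq_left.mpr (Ioc_subset_Ioc_right hu.2)]
    rw [← MeasureTheory.IntegrableOn, ← intervalIntegrable_iff_integrableOn_Ioc_of_le hu.1.le]
    exact A_intble γ hα0 hα1 hu.1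
  · apply MeasureTheory.Integrable.congr
      (f := fun u : ℝ => Real.exp (-γ * u))
    · rw [← MeasureTheory.IntegrableOn]
      exact (Continuous.integrableOn_Ioc (by fun_prop))
    · filter_upwards [MeasureTheory.ae_restrict_mem measurableSet_Ioc] with u hu
      have hval : ∀ τ ∈ Ioc (0:ℝ) u,
          ‖(Real.exp (-γ * (u - τ)) * (u - τ) ^ (-α) / Real.Gamma (1 - α)) *
            (Real.exp (-γ * τ) * τ ^ (α - 1) / Real.Gamma α)‖
          = (Real.exp (-γ * (u - τ)) * (u - τ) ^ (-α) / Real.Gamma (1 - α)) *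
            (Real.exp (-γ * τ) * τ ^ (α - 1) / Real.Gamma α) := by
        intro τ hτ
        have h1 : (0:ℝ) ≤ (u - τ) ^ (-α) := Real.rpow_nonneg (by linarith [hτ.2]) _
        have h2 : (0:ℝ) ≤ τ ^ (α - 1) := Real.rpow_nonneg hτ.1.le _
        have h3 := Real.exp_nonneg (-γ * (u - τ))
        have h4 := Real.exp_nonneg (-γ * τ)
        have hΓ1 : (0:ℝ) < Real.Gamma (1 - α) := Real.Gamma_pos_of_pos (by linarith)
        have hΓ2 : (0:ℝ) < Real.Gamma α := Real.Gamma_pos_of_pos hα0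
        rw [Real.norm_eq_abs, abs_of_nonneg (by positivity)]
      symm
      calc (∫ τ, ‖(Ioc (0:ℝ) u).indicator
            (fun τ => (Real.exp (-γ * (u - τ)) * (u - τ) ^ (-α) / Real.Gamma (1 - α)) *
              (Real.exp (-γ * τ) * τ ^ (α - 1) / Real.Gamma α)) τ‖
            ∂(MeasureTheory.volume.restrict (Ioc (0:ℝ) t)))
          = ∫ τ in Ioc (0:ℝ) t, (Ioc (0:ℝ) u).indicator
              (fun τ => ‖(Real.exp (-γ * (u - τ)) * (u - τ) ^ (-α) / Real.Gamma (1 - α)) *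
                (Real.exp (-γ * τ) * τ ^ (α - 1) / Real.Gamma α)‖) τ := by
            refine MeasureTheory.integral_congr_ae (Filter.Eventually.of_forall fun τ => ?_)
            simp only [norm_indicator_eq_indicator_norm]
        _ = ∫ τ in Ioc (0:ℝ) t ∩ Ioc (0:ℝ) u,
              ‖(Real.exp (-γ * (u - τ)) * (u - τ) ^ (-α) / Real.Gamma (1 - α)) *
                (Real.exp (-γ * τ) * τ ^ (α - 1) / Real.Gamma α)‖ :=
            MeasureTheory.setIntegral_indicator measurableSet_Ioc
        _ = ∫ τ in Ioc (0:ℝ) u,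
              ‖(Real.exp (-γ * (u - τ)) * (u - τ) ^ (-α) / Real.Gamma (1 - α)) *
                (Real.exp (-γ * τ) * τ ^ (α - 1) / Real.Gamma α)‖ := by
            rw [inter_eq_right.mpr (Ioc_subset_Ioc_right hu.2)]
        _ = ∫ τ in Ioc (0:ℝ) u,
              (Real.exp (-γ * (u - τ)) * (u - τ) ^ (-α) / Real.Gamma (1 - α)) *
                (Real.exp (-γ * τ) * τ ^ (α - 1) / Real.Gamma α) :=
            MeasureTheory.setIntegral_congr_fun measurableSet_Ioc hval
        _ = ∫ τ in (0:ℝ)..u,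
              (Real.exp (-γ * (u - τ)) * (u - τ) ^ (-α) / Real.Gamma (1 - α)) *
                (Real.exp (-γ * τ) * τ ^ (α - 1) / Real.Gamma α) :=
            (intervalIntegral.integral_of_le hu.1.le).symm
        _ = Real.exp (-γ * u) := conv_A γ hα0 hα1 hu.1

lemma conv_B {α γ t : ℝ} (hα0 : 0 < α) (hα1 : α < 1) (hγ : 0 ≤ γ) (ht : 0 < t) :
    ∫ s in (0:ℝ)..t, (Real.exp (-γ * (t - s)) * (t - s) ^ (-α) / Real.Gamma (1 - α)) *
        (∫ τ in (0:ℝ)..s, Real.exp (-γ * τ) * τ ^ (α - 1) / Real.Gamma α)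
      = ∫ u in (0:ℝ)..t, Real.exp (-γ * u) := by
  rw [intervalIntegral.integral_of_le ht.le, intervalIntegral.integral_of_le ht.le]
  have lhs_eq : ∫ s in Ioc (0:ℝ) t,
      (Real.exp (-γ * (t - s)) * (t - s) ^ (-α) / Real.Gamma (1 - α)) *
        (∫ τ in (0:ℝ)..s, Real.exp (-γ * τ) * τ ^ (α - 1) / Real.Gamma α)
      = ∫ τ in Ioc (0:ℝ) t,
          (∫ x in (0:ℝ)..(t - τ), Real.exp (-γ * x) * x ^ (-α) / Real.Gamma (1 - α)) *
            (Real.exp (-γ * τ) * τ ^ (α - 1) / Real.Gamma α) := by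
    have step1 : ∫ s in Ioc (0:ℝ) t,
        (Real.exp (-γ * (t - s)) * (t - s) ^ (-α) / Real.Gamma (1 - α)) *
          (∫ τ in (0:ℝ)..s, Real.exp (-γ * τ) * τ ^ (α - 1) / Real.Gamma α)
        = ∫ s in Ioc (0:ℝ) t, ∫ τ in Ioc (0:ℝ) s,
            (Real.exp (-γ * (t - s)) * (t - s) ^ (-α) / Real.Gamma (1 - α)) *
              (Real.exp (-γ * τ) * τ ^ (α - 1) / Real.Gamma α) := by
      refine MeasureTheory.setIntegral_congr_fun measurableSet_Ioc fun s hs => ?_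
      rw [intervalIntegral.integral_of_le hs.1.le, ← MeasureTheory.integral_const_mul]
    rw [step1, triangle_swap ht _ (fub1 hα0 hα1 hγ ht)]
    refine MeasureTheory.setIntegral_congr_fun measurableSet_Ioc fun τ hτ => ?_
    rw [MeasureTheory.integral_mul_const, ← intervalIntegral.integral_of_le hτ.2,
      intervalIntegral.integral_comp_sub_left
        (fun u => Real.exp (-γ * u) * u ^ (-α) / Real.Gamma (1 - α)) t, sub_self]
  have rhs_eq : ∫ u in Ioc (0:ℝ) t, Real.exp (-γ * u)
      = ∫ τ in Ioc (0:ℝ) t,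
          (∫ x in (0:ℝ)..(t - τ), Real.exp (-γ * x) * x ^ (-α) / Real.Gamma (1 - α)) *
            (Real.exp (-γ * τ) * τ ^ (α - 1) / Real.Gamma α) := by
    have step1 : ∫ u in Ioc (0:ℝ) t, Real.exp (-γ * u)
        = ∫ u in Ioc (0:ℝ) t, ∫ τ in Ioc (0:ℝ) u,
            (Real.exp (-γ * (u - τ)) * (u - τ) ^ (-α) / Real.Gamma (1 - α)) *
              (Real.exp (-γ * τ) * τ ^ (α - 1) / Real.Gamma α) := by
      refine MeasureTheory.setIntegral_congr_fun measurableSet_Ioc fun u hu => ?_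
      rw [← intervalIntegral.integral_of_le hu.1.le]
      exact (conv_A γ hα0 hα1 hu.1).symm
    rw [step1, triangle_swap ht _ (fub2 hα0 hα1 hγ ht)]
    refine MeasureTheory.setIntegral_congr_fun measurableSet_Ioc fun τ hτ => ?_
    rw [MeasureTheory.integral_mul_const, ← intervalIntegral.integral_of_le hτ.2,
      intervalIntegral.integral_comp_sub_right
        (fun u => Real.exp (-γ * u) * u ^ (-α) / Real.Gamma (1 - α)) τ, sub_self]
  rw [lhs_eq, rhs_eq]

/-- For the exponentially weighted time-fractional kernel pair
`k(t) = e^{−γt} t^{−α}/Γ(1−α)` and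
`l(t) = e^{−γt} t^{α−1}/Γ(α) + γ ∫₀ᵗ e^{−γτ} τ^{α−1}/Γ(α) dτ`
with `α ∈ (0,1)`, `γ ≥ 0`, one has `(k*l)(t) = 1` for all `t > 0`. -/
theorem exp_weighted_fractional_conv_eq_one (α γ : ℝ)
    (hα0 : 0 < α) (hα1 : α < 1) (hγ : 0 ≤ γ) :
    ∀ t : ℝ, 0 < t →
      (∫ s in (0:ℝ)..t,
          (Real.exp (-γ * (t - s)) * (t - s) ^ (-α) / Real.Gamma (1 - α)) *
            (Real.exp (-γ * s) * s ^ (α - 1) / Real.Gamma α +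
              γ * ∫ τ in (0:ℝ)..s, Real.exp (-γ * τ) * τ ^ (α - 1) / Real.Gamma α)) = 1 := by
  intro t ht
  have hG : ContinuousOn (fun s => ∫ τ in (0:ℝ)..s,
      Real.exp (-γ * τ) * τ ^ (α - 1) / Real.Gamma α) (uIcc 0 t) :=
    intervalIntegral.continuousOn_primitive_interval' (g_intble γ hα0 0 t) left_mem_uIcc
  have h₂ : IntervalIntegrable (fun s =>
      (Real.exp (-γ * (t - s)) * (t - s) ^ (-α) / Real.Gamma (1 - α)) *
        (γ * ∫ τ in (0:ℝ)..s, Real.exp (-γ * τ) * τ ^ (α - 1) / Real.Gamma α))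
      MeasureTheory.volume 0 t := by
    have hfun : (fun s =>
        (Real.exp (-γ * (t - s)) * (t - s) ^ (-α) / Real.Gamma (1 - α)) *
          (γ * ∫ τ in (0:ℝ)..s, Real.exp (-γ * τ) * τ ^ (α - 1) / Real.Gamma α))
        = fun s => (t - s) ^ (-α) * ((Real.exp (-γ * (t - s)) / Real.Gamma (1 - α)) *
          (γ * ∫ τ in (0:ℝ)..s, Real.exp (-γ * τ) * τ ^ (α - 1) / Real.Gamma α)) := by
      funext s; ring
    rw [hfun]
    exact (rpow_neg_intble hα1 ht).mul_continuousOn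
      ((Continuous.continuousOn (by fun_prop)).mul (continuousOn_const.mul hG))
  simp_rw [mul_add]
  rw [intervalIntegral.integral_add (A_intble γ hα0 hα1 ht) h₂, conv_A γ hα0 hα1 ht]
  have hpull : (fun s =>
      (Real.exp (-γ * (t - s)) * (t - s) ^ (-α) / Real.Gamma (1 - α)) *
        (γ * ∫ τ in (0:ℝ)..s, Real.exp (-γ * τ) * τ ^ (α - 1) / Real.Gamma α))
      = fun s => γ * ((Real.exp (-γ * (t - s)) * (t - s) ^ (-α) / Real.Gamma (1 - α)) *
        (∫ τ in (0:ℝ)..s, Real.exp (-γ * τ) * τ ^ (α - 1) / Real.Gamma α)) := by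
    funext s; ring
  rw [hpull, intervalIntegral.integral_const_mul, conv_B hα0 hα1 hγ ht]
  rcases eq_or_lt_of_le hγ with h0 | h0
  · simp [← h0]
  · have hγne : -γ ≠ 0 := by linarith
    have : ∫ u in (0:ℝ)..t, Real.exp (-γ * u) = (-γ)⁻¹ * (Real.exp (-γ * t) - 1) := by
      rw [intervalIntegral.integral_comp_mul_left (fun x => Real.exp x) hγne]
      simp [integral_exp]
    rw [this]
    field_simp
    ring
end
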